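/- arXiv:1409.3961 — 6 statements merged into one kernel-verified Lean document; each statement's English description precedes it below -/
import Mathlib

section
/- Let (X, 𝒜, μ) be a σ-finite measure space, A : X → X a nonsingular measurable transformation, and h_A = d(μ∘A⁻¹)/dμ. The composition operator C_A is densely defined in L²(μ) if and only if h_A < ∞ μ-almost everywhere. -/
open MeasureTheory

open scoped ENNReal

section aux

variable {X : Type*} [MeasurableSpace X] {μ : Measure X} {A : X → X} {h : X → ℝ≥0∞}

lemma key_iff (hA : Measurable A) (hh : Measurable h) (hd : μ.map A = μ.withDensity h)
    {f : X → ℂ} (hsm : AEStronglyMeasurable f μ) :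
    MemLp (fun x => f (A x)) 2 μ ↔ ∫⁻ x, h x * ‖f x‖₊ ^ (2:ℝ) ∂μ < ∞ := by
  have hac : μ.map A ≪ μ := hd ▸ withDensity_absolutelyContinuous μ h
  have hsm' : AEStronglyMeasurable f (μ.map A) := hsm.mono_ac hac
  have h1 : MemLp (fun x => f (A x)) 2 μ ↔ MemLp f 2 (μ.map A) :=
    (memLp_map_measure_iff hsm' hA.aemeasurable).symm
  rw [h1, hd]
  have hsmw : AEStronglyMeasurable f (μ.withDensity h) :=
    hsm.mono_ac (withDensity_absolutelyContinuous μ h)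
  constructor
  · intro hm
    have := lintegral_rpow_enorm_lt_top_of_eLpNorm_lt_top (f := f)
      (two_ne_zero) (ENNReal.ofNat_ne_top) hm.eLpNorm_lt_top
    rw [lintegral_withDensity_eq_lintegral_mul₀' hh.aemeasurable
      ((hsmw.aemeasurable.enorm.pow_const (2:ℝ≥0∞).toReal))] at this
    simpa [enorm_eq_nnnorm] using this
  · intro hl
    refine ⟨hsmw, ?_⟩
    rw [eLpNorm_lt_top_iff_lintegral_rpow_enorm_lt_top two_ne_zero ENNReal.ofNat_ne_top,
      lintegral_withDensity_eq_lintegral_mul₀' hh.aemeasurable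
      ((hsmw.aemeasurable.enorm.pow_const (2:ℝ≥0∞).toReal))]
    simpa [enorm_eq_nnnorm] using hl

end aux

section dir1
variable {X : Type*} [MeasurableSpace X] {μ : Measure X} [SigmaFinite μ] {A : X → X} {h : X → ℝ≥0∞}

lemma forward_dir (hA : Measurable A) (hh : Measurable h) (hd : μ.map A = μ.withDensity h)
    (hdense : Dense {f : Lp ℂ 2 μ | MemLp (fun x => f (A x)) 2 μ}) :
    ∀ᵐ x ∂μ, h x < ∞ := by
  by_contra hc
  rw [ae_iff] at hc
  have hSeq : {x | ¬ h x < ∞} = {x | h x = ∞} := by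
    ext x; simp [lt_top_iff_ne_top]
  rw [hSeq] at hc
  have hS : MeasurableSet {x | h x = ∞} := hh (measurableSet_singleton ∞)
  obtain ⟨T, hT, hTS, hTpos, hTfin⟩ :=
    Measure.exists_subset_measure_lt_top hS (pos_iff_ne_zero.2 hc)
  set g : Lp ℂ 2 μ := indicatorConstLp 2 hT hTfin.ne (1 : ℂ) with hg
  have hrne0 : (μ T) ^ (1/2 : ℝ) ≠ 0 := by
    simp [ENNReal.rpow_eq_zero_iff, hTpos.ne', hTfin.ne]
  have hrnetop : (μ T) ^ (1/2 : ℝ) ≠ ∞ :=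
    ENNReal.rpow_ne_top_of_nonneg (by norm_num) hTfin.ne
  have hεpos : 0 < ((μ T) ^ (1/2 : ℝ)).toReal := ENNReal.toReal_pos hrne0 hrnetop
  obtain ⟨b, hbD, hdist⟩ := Metric.mem_closure_iff.mp (hdense g) _ hεpos
  -- b vanishes a.e. on T
  have hbsm := (Lp.memLp b).aestronglyMeasurable
  have hbint : ∫⁻ x, h x * ‖b x‖₊ ^ (2:ℝ) ∂μ < ∞ := (key_iff hA hh hd hbsm).mp hbD
  have hae : ∀ᵐ x ∂μ, h x * ‖b x‖₊ ^ (2:ℝ) < ∞ :=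
    ae_lt_top' (hh.aemeasurable.mul (hbsm.aemeasurable.enorm.pow_const _)) hbint.ne
  have hb0 : ∀ᵐ x ∂μ.restrict T, b x = 0 := by
    filter_upwards [ae_restrict_of_ae hae, ae_restrict_mem hT] with x hx hxT
    by_contra hbx
    have h1 : h x = ∞ := hTS hxT
    have h2 : (‖b x‖₊ : ℝ≥0∞) ^ (2:ℝ) ≠ 0 := by
      simp [ENNReal.rpow_eq_zero_iff, nnnorm_eq_zero, hbx]
    rw [h1, ENNReal.top_mul h2] at hx
    exact (lt_irrefl _ hx).elim
  have hsub : ⇑(g - b) =ᵐ[μ.restrict T] fun _ => (1:ℂ) := by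
    filter_upwards [ae_restrict_of_ae (Lp.coeFn_sub g b),
      ae_restrict_of_ae (indicatorConstLp_coeFn (p := 2) (hs := hT) (hμs := hTfin.ne) (c := (1:ℂ))),
      ae_restrict_mem hT, hb0] with x hx hgx hxT hbx
    have hgx1 : (⇑g) x = 1 := by rw [hg]; rw [hgx, Set.indicator_of_mem hxT]
    rw [hx, Pi.sub_apply, hgx1, hbx, sub_zero]
  have hrT : μ.restrict T ≠ 0 := by
    intro h0
    apply hTpos.ne'
    rw [← Measure.restrict_apply_univ, h0]; simp
  have hconst : eLpNorm (⇑(g - b)) 2 (μ.restrict T) = (μ T) ^ (1/2 : ℝ) := by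
    rw [eLpNorm_congr_ae hsub, eLpNorm_const (1:ℂ) two_ne_zero hrT]
    simp [Measure.restrict_apply_univ]
  have hle : (μ T) ^ (1/2 : ℝ) ≤ eLpNorm (⇑(g - b)) 2 μ :=
    hconst ▸ eLpNorm_mono_measure _ Measure.restrict_le_self
  have : ((μ T) ^ (1/2 : ℝ)).toReal ≤ dist g b := by
    rw [dist_eq_norm, Lp.norm_def]
    exact ENNReal.toReal_mono (Lp.eLpNorm_ne_top (g - b)) hle
  linarith
end dir1

section dir2
open Filter
open scoped Topology
variable {X : Type*} [MeasurableSpace X] {μ : Measure X} [SigmaFinite μ] {A : X → X} {h : X → ℝ≥0∞}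

omit [SigmaFinite μ] in
lemma reverse_dir (hA : Measurable A) (hh : Measurable h) (hd : μ.map A = μ.withDensity h)
    (hfin : ∀ᵐ x ∂μ, h x < ∞) :
    Dense {f : Lp ℂ 2 μ | MemLp (fun x => f (A x)) 2 μ} := by
  intro f
  set E : ℕ → Set X := fun n => {x | h x ≤ n} with hE
  have hEm : ∀ n, MeasurableSet (E n) := fun n => hh measurableSet_Iic
  have hmem : ∀ n, MemLp ((E n).indicator ⇑f) 2 μ := fun n => (Lp.memLp f).indicator (hEm n)
  set g : ℕ → Lp ℂ 2 μ := fun n => (hmem n).toLp _ with hgdef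
  have hflt : ∫⁻ x, (‖f x‖₊ : ℝ≥0∞) ^ (2:ℝ) ∂μ < ∞ := by
    have := lintegral_rpow_enorm_lt_top_of_eLpNorm_lt_top (f := ⇑f) two_ne_zero
      ENNReal.ofNat_ne_top (Lp.eLpNorm_lt_top f)
    simpa [enorm_eq_nnnorm] using this
  -- each g n is in the domain
  have hgD : ∀ n, MemLp (fun x => (g n) (A x)) 2 μ := by
    intro n
    rw [key_iff hA hh hd (Lp.memLp (g n)).aestronglyMeasurable]
    have hcongr : (fun x => h x * (‖(g n) x‖₊ : ℝ≥0∞) ^ (2:ℝ)) =ᵐ[μ]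
        fun x => h x * (‖(E n).indicator (⇑f) x‖₊ : ℝ≥0∞) ^ (2:ℝ) := by
      filter_upwards [MemLp.coeFn_toLp (hmem n)] with x hx
      rw [hx]
    rw [lintegral_congr_ae hcongr]
    have hbound : ∀ x, h x * (‖(E n).indicator (⇑f) x‖₊ : ℝ≥0∞) ^ (2:ℝ) ≤
        (n : ℝ≥0∞) * (‖f x‖₊ : ℝ≥0∞) ^ (2:ℝ) := by
      intro x
      by_cases hx : x ∈ E n
      · rw [Set.indicator_of_mem hx]
        exact mul_le_mul_left hx _
      · rw [Set.indicator_of_notMem hx]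
        simp [ENNReal.zero_rpow_of_pos (by norm_num : (0:ℝ) < 2)]
    calc ∫⁻ x, h x * (‖(E n).indicator (⇑f) x‖₊ : ℝ≥0∞) ^ (2:ℝ) ∂μ
        ≤ ∫⁻ x, (n : ℝ≥0∞) * (‖f x‖₊ : ℝ≥0∞) ^ (2:ℝ) ∂μ := lintegral_mono hbound
      _ = (n : ℝ≥0∞) * ∫⁻ x, (‖f x‖₊ : ℝ≥0∞) ^ (2:ℝ) ∂μ :=
          lintegral_const_mul' _ _ (ENNReal.natCast_ne_top n)
      _ < ∞ := ENNReal.mul_lt_top (ENNReal.natCast_lt_top n) hflt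
  -- convergence of g n to f
  set ν : Measure X := μ.withDensity (fun x => (‖f x‖₊ : ℝ≥0∞) ^ (2:ℝ)) with hν
  have hνap : ∀ s, MeasurableSet s → ν s = ∫⁻ x in s, (‖f x‖₊ : ℝ≥0∞) ^ (2:ℝ) ∂μ :=
    fun s hs => withDensity_apply _ hs
  have hν_fin : ν Set.univ < ∞ := by
    rw [hνap _ MeasurableSet.univ, Measure.restrict_univ]; exact hflt
  have hmono : Monotone E := by
    intro n m hnm x hx
    exact le_trans hx (by exact_mod_cast hnm : (n:ℝ≥0∞) ≤ m)
  have hiInter : ⋂ n, (E n)ᶜ = {x | h x = ∞} := by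
    ext x
    simp only [Set.mem_iInter, Set.mem_compl_iff, hE, Set.mem_setOf_eq]
    constructor
    · intro hx
      by_contra hxx
      obtain ⟨n, hn⟩ := ENNReal.exists_nat_gt hxx
      exact hx n hn.le
    · intro hx n
      rw [hx]; simp
  have hμtop : μ {x | h x = ∞} = 0 := by
    rw [ae_iff] at hfin
    have : {x | ¬ h x < ∞} = {x | h x = ∞} := by ext x; simp [lt_top_iff_ne_top]
    rwa [this] at hfin
  have hνtop : ν (⋂ n, (E n)ᶜ) = 0 := by
    rw [hνap _ (MeasurableSet.iInter fun n => (hEm n).compl), hiInter]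
    exact setLIntegral_measure_zero _ _ hμtop
  have htend : Tendsto (fun n => ν ((E n)ᶜ)) atTop (𝓝 0) := by
    have := tendsto_measure_iInter_atTop (μ := ν)
      (fun n => ((hEm n).compl).nullMeasurableSet)
      (fun n m hnm => Set.compl_subset_compl.2 (hmono hnm))
      ⟨0, (lt_of_le_of_lt (measure_mono (Set.subset_univ _)) hν_fin).ne⟩
    rwa [hνtop] at this
  have hdist : ∀ n, dist (g n) f = ((ν ((E n)ᶜ)) ^ (1/2:ℝ)).toReal := by
    intro n
    rw [dist_eq_norm, Lp.norm_def]
    congr 1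
    have hstep1 : ⇑(g n - f) =ᵐ[μ] fun x => -(((E n)ᶜ).indicator (⇑f) x) := by
      filter_upwards [Lp.coeFn_sub (g n) f, MemLp.coeFn_toLp (hmem n)] with x hx1 hx2
      rw [hx1, Pi.sub_apply, hx2]
      by_cases hx : x ∈ E n
      · rw [Set.indicator_of_mem hx, Set.indicator_of_notMem (by simpa using hx)]
        simp
      · rw [Set.indicator_of_notMem hx, Set.indicator_of_mem (by simpa using hx)]
        simp
    calc eLpNorm (⇑(g n - f)) 2 μ
        = eLpNorm (fun x => -(((E n)ᶜ).indicator (⇑f) x)) 2 μ := eLpNorm_congr_ae hstep1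
      _ = eLpNorm (((E n)ᶜ).indicator (⇑f)) 2 μ := eLpNorm_neg _ _ _
      _ = eLpNorm (⇑f) 2 (μ.restrict (E n)ᶜ) :=
          eLpNorm_indicator_eq_eLpNorm_restrict (hEm n).compl
      _ = (∫⁻ x in (E n)ᶜ, (‖f x‖₊ : ℝ≥0∞) ^ ((2:ℝ≥0∞).toReal) ∂μ) ^ (1/(2:ℝ≥0∞).toReal) :=
          eLpNorm_eq_lintegral_rpow_enorm_toReal two_ne_zero ENNReal.ofNat_ne_top
      _ = (ν ((E n)ᶜ)) ^ (1/2:ℝ) := by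
          rw [hνap _ (hEm n).compl]
          norm_num
  have htend2 : Tendsto (fun n => dist (g n) f) atTop (𝓝 0) := by
    have h2 : Tendsto (fun n => (ν ((E n)ᶜ)) ^ (1/2:ℝ)) atTop (𝓝 0) := by
      have hc := (ENNReal.continuous_rpow_const (y := (1/2:ℝ))).tendsto 0
      have := hc.comp htend
      simpa [Function.comp_def, ENNReal.zero_rpow_of_pos (by norm_num : (0:ℝ) < 1/2)] using this
    have h3 := (ENNReal.tendsto_toReal (by simp : (0:ℝ≥0∞) ≠ ∞)).comp h2
    simp only [Function.comp_def] at h3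
    simpa [hdist] using h3
  exact mem_closure_of_tendsto (tendsto_iff_dist_tendsto_zero.mpr htend2)
    (Filter.Eventually.of_forall hgD)
end dir2

/-- Let `(X, 𝒜, μ)` be σ-finite, `A : X → X` a nonsingular measurable
transformation and `h = d(μ∘A⁻¹)/dμ` (i.e. `μ.map A = μ.withDensity h`). The composition
operator `C_A` is densely defined in `L²(μ)` (its domain `{f ∈ L²(μ) : f ∘ A ∈ L²(μ)}` is
dense) if and only if `h < ∞` a.e. `[μ]`. -/
theorem stmt_2 {X : Type*} [MeasurableSpace X] (μ : Measure X) [SigmaFinite μ]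
    (A : X → X) (hA : Measurable A)
    (h : X → ℝ≥0∞) (hh : Measurable h) (hd : μ.map A = μ.withDensity h) :
    Dense {f : Lp ℂ 2 μ | MemLp (fun x => f (A x)) 2 μ} ↔ ∀ᵐ x ∂μ, h x < ∞ :=
  ⟨forward_dir hA hh hd, reverse_dir hA hh hd⟩
end

section
/- Let μₙ be the standard Gaussian measure on ℝⁿ and A an invertible linear transformation of ℝⁿ with operator norm ‖A‖ ≤ 1. Then the composition operator C_A f = f ∘ A is bounded on L²(μₙ) with ‖C_A‖² = |det A|⁻¹. -/
open MeasureTheory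

open scoped ENNReal

/-- The standard `n`-dimensional Gaussian measure `dμₙ = (2π)^{-n/2} exp(-‖x‖²/2) dλₙ`. -/
noncomputable def gaussianMeasure (n : ℕ) : Measure (EuclideanSpace ℝ (Fin n)) :=
  volume.withDensity fun x =>
    ENNReal.ofReal ((2 * Real.pi) ^ (-(n : ℝ) / 2) * Real.exp (-‖x‖ ^ 2 / 2))

lemma gauss_lintegral_comp_le {n : ℕ}
    (A : EuclideanSpace ℝ (Fin n) ≃ₗ[ℝ] EuclideanSpace ℝ (Fin n))
    (hA1 : ∀ x, ‖A x‖ ≤ ‖x‖)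
    {g : EuclideanSpace ℝ (Fin n) → ℝ≥0∞} (hg : Measurable g) :
    ∫⁻ x, g (A x) ∂(gaussianMeasure n)
      ≤ ENNReal.ofReal |LinearMap.det (A : EuclideanSpace ℝ (Fin n) →ₗ[ℝ]
          EuclideanSpace ℝ (Fin n))|⁻¹ * ∫⁻ x, g x ∂(gaussianMeasure n) := by
  set c : ℝ := (2 * Real.pi) ^ (-(n : ℝ) / 2) with hc
  have hcpos : 0 < c := Real.rpow_pos_of_pos (by positivity) _
  set ρ : EuclideanSpace ℝ (Fin n) → ℝ≥0∞ :=
    fun x => ENNReal.ofReal (c * Real.exp (-‖x‖ ^ 2 / 2)) with hρdef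
  have hρ : Measurable ρ := by measurability
  have hAc : Continuous (⇑A) := by
    have := (A : EuclideanSpace ℝ (Fin n) →ₗ[ℝ]
      EuclideanSpace ℝ (Fin n)).continuous_of_finiteDimensional
    simpa using this
  have hAm : Measurable (⇑A) := hAc.measurable
  have hdet : LinearMap.det (A : EuclideanSpace ℝ (Fin n) →ₗ[ℝ]
      EuclideanSpace ℝ (Fin n)) ≠ 0 := (LinearEquiv.isUnit_det' A).ne_zero
  have hmap : Measure.map (⇑A) volume
      = ENNReal.ofReal |(LinearMap.det (A : EuclideanSpace ℝ (Fin n) →ₗ[ℝ]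
          EuclideanSpace ℝ (Fin n)))⁻¹| • volume := by
    have := Measure.map_linearMap_addHaar_eq_smul_addHaar (volume :
      Measure (EuclideanSpace ℝ (Fin n))) hdet
    simpa using this
  have hμ : gaussianMeasure n = volume.withDensity ρ := rfl
  rw [hμ]
  rw [lintegral_withDensity_eq_lintegral_mul volume hρ
      (show Measurable (fun x => g (A x)) from hg.comp hAm),
    lintegral_withDensity_eq_lintegral_mul volume hρ hg]
  have step1 : ∫⁻ x, (ρ * fun x => g (A x)) x ∂volume
      ≤ ∫⁻ x, ρ (A x) * g (A x) ∂volume := by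
    refine lintegral_mono fun x => ?_
    refine mul_le_mul_left ?_ _
    refine ENNReal.ofReal_le_ofReal ?_
    refine mul_le_mul_of_nonneg_left ?_ hcpos.le
    refine Real.exp_le_exp.mpr ?_
    have h1 : ‖A x‖ ^ 2 ≤ ‖x‖ ^ 2 := by
      have := hA1 x
      nlinarith [norm_nonneg (A x), norm_nonneg x]
    nlinarith
  refine step1.trans ?_
  have step2 : ∫⁻ x, ρ (A x) * g (A x) ∂volume
      = ∫⁻ y, ρ y * g y ∂(Measure.map (⇑A) volume) :=
    (lintegral_map (hρ.mul hg) hAm).symm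
  rw [step2, hmap, lintegral_smul_measure, abs_inv]
  rfl

/-- Let `μₙ` be the standard Gaussian measure on `ℝⁿ` and `A` an invertible
linear transformation with operator norm `‖A‖ ≤ 1`. Then the composition operator
`C_A f = f ∘ A` is bounded on `L²(μₙ)` with `‖C_A‖² = |det A|⁻¹`: the norm inequality
holds with constant `(|det A|⁻¹)^{1/2}` and the optimal constant squared is `|det A|⁻¹`. -/
theorem stmt_6 {n : ℕ}
    (A : EuclideanSpace ℝ (Fin n) ≃ₗ[ℝ] EuclideanSpace ℝ (Fin n))
    (hA : ‖LinearMap.toContinuousLinearMap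
      (A : EuclideanSpace ℝ (Fin n) →ₗ[ℝ] EuclideanSpace ℝ (Fin n))‖ ≤ 1) :
    (∀ f : EuclideanSpace ℝ (Fin n) → ℂ, Measurable f →
        eLpNorm (f ∘ A) 2 (gaussianMeasure n)
          ≤ (ENNReal.ofReal |LinearMap.det (A : EuclideanSpace ℝ (Fin n) →ₗ[ℝ]
              EuclideanSpace ℝ (Fin n))|⁻¹) ^ ((1 : ℝ) / 2)
            * eLpNorm f 2 (gaussianMeasure n)) ∧
      sInf {C : ℝ≥0∞ | ∀ f : EuclideanSpace ℝ (Fin n) → ℂ, Measurable f →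
          eLpNorm (f ∘ A) 2 (gaussianMeasure n) ≤ C * eLpNorm f 2 (gaussianMeasure n)} ^ 2
        = ENNReal.ofReal |LinearMap.det (A : EuclideanSpace ℝ (Fin n) →ₗ[ℝ]
            EuclideanSpace ℝ (Fin n))|⁻¹ := by
  set d : ℝ := LinearMap.det (A : EuclideanSpace ℝ (Fin n) →ₗ[ℝ]
    EuclideanSpace ℝ (Fin n)) with hd
  have hdet : d ≠ 0 := (LinearEquiv.isUnit_det' A).ne_zero
  set D : ℝ≥0∞ := ENNReal.ofReal |d|⁻¹ with hD
  -- norm contraction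
  have hA1 : ∀ x, ‖A x‖ ≤ ‖x‖ := by
    intro x
    have h := (LinearMap.toContinuousLinearMap (A : EuclideanSpace ℝ (Fin n) →ₗ[ℝ]
      EuclideanSpace ℝ (Fin n))).le_opNorm x
    have h2 : ‖LinearMap.toContinuousLinearMap (A : EuclideanSpace ℝ (Fin n) →ₗ[ℝ]
        EuclideanSpace ℝ (Fin n))‖ * ‖x‖ ≤ 1 * ‖x‖ :=
      mul_le_mul_of_nonneg_right hA (norm_nonneg x)
    calc ‖A x‖ = ‖LinearMap.toContinuousLinearMap (A : EuclideanSpace ℝ (Fin n) →ₗ[ℝ]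
        EuclideanSpace ℝ (Fin n)) x‖ := rfl
      _ ≤ 1 * ‖x‖ := h.trans h2
      _ = ‖x‖ := one_mul _
  -- part 1
  have part1 : ∀ f : EuclideanSpace ℝ (Fin n) → ℂ, Measurable f →
      eLpNorm (f ∘ A) 2 (gaussianMeasure n)
        ≤ D ^ ((1 : ℝ) / 2) * eLpNorm f 2 (gaussianMeasure n) := by
    intro f hf
    have hg : Measurable (fun x => (‖f x‖₊ : ℝ≥0∞) ^ (2 : ℝ)) :=
      ENNReal.continuous_rpow_const.measurable.comp hf.enorm
    have key := gauss_lintegral_comp_le A hA1 hg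
    rw [eLpNorm_eq_lintegral_rpow_enorm_toReal two_ne_zero ENNReal.ofNat_ne_top,
      eLpNorm_eq_lintegral_rpow_enorm_toReal two_ne_zero ENNReal.ofNat_ne_top]
    simp only [ENNReal.toReal_ofNat, Function.comp_apply]
    calc (∫⁻ x, (‖f (A x)‖₊ : ℝ≥0∞) ^ (2 : ℝ) ∂(gaussianMeasure n)) ^ ((1:ℝ)/2)
        ≤ (D * ∫⁻ x, (‖f x‖₊ : ℝ≥0∞) ^ (2 : ℝ) ∂(gaussianMeasure n)) ^ ((1:ℝ)/2) :=
          ENNReal.rpow_le_rpow key (by norm_num)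
      _ = D ^ ((1:ℝ)/2) * (∫⁻ x, (‖f x‖₊ : ℝ≥0∞) ^ (2 : ℝ) ∂(gaussianMeasure n)) ^ ((1:ℝ)/2) :=
          ENNReal.mul_rpow_of_nonneg _ _ (by norm_num)
  refine ⟨part1, ?_⟩
  set S : Set ℝ≥0∞ := {C : ℝ≥0∞ | ∀ f : EuclideanSpace ℝ (Fin n) → ℂ, Measurable f →
      eLpNorm (f ∘ A) 2 (gaussianMeasure n) ≤ C * eLpNorm f 2 (gaussianMeasure n)} with hS
  have hmem : D ^ ((1 : ℝ) / 2) ∈ S := part1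
  -- gaussian density constants
  set c : ℝ := (2 * Real.pi) ^ (-(n : ℝ) / 2) with hc
  have hcpos : 0 < c := Real.rpow_pos_of_pos (by positivity) _
  set ρ : EuclideanSpace ℝ (Fin n) → ℝ≥0∞ :=
    fun x => ENNReal.ofReal (c * Real.exp (-‖x‖ ^ 2 / 2)) with hρdef
  have hρ : Measurable ρ :=
    (ENNReal.continuous_ofReal.comp (continuous_const.mul
      (Real.continuous_exp.comp (((continuous_norm.pow 2).neg).div_const 2)))).measurable
  have hμ : gaussianMeasure n = volume.withDensity ρ := rfl
  have hAsymmc : Continuous (⇑A.symm) := by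
    have := (A.symm : EuclideanSpace ℝ (Fin n) →ₗ[ℝ]
      EuclideanSpace ℝ (Fin n)).continuous_of_finiteDimensional
    simpa using this
  -- lower bound for every C ∈ S
  have hlow : ∀ C ∈ S, D ≤ C ^ 2 := by
    intro C hC
    have key : ∀ t : ℝ, 0 < t →
        ENNReal.ofReal (Real.exp (-t ^ 2 / 2)) ≤ C ^ 2 * ENNReal.ofReal |d| := by
      intro t ht
      set B : Set (EuclideanSpace ℝ (Fin n)) := Metric.ball 0 t with hB
      have hBm : MeasurableSet B := measurableSet_ball
      have hABeq : ⇑A '' B = ⇑A.symm ⁻¹' B := by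
        ext y
        constructor
        · rintro ⟨x, hx, rfl⟩; simpa using hx
        · intro hy; exact ⟨A.symm y, hy, by simp⟩
      have hABm : MeasurableSet (⇑A '' B) := by
        rw [hABeq]; exact hAsymmc.measurable hBm
      set f : EuclideanSpace ℝ (Fin n) → ℂ := (⇑A '' B).indicator (fun _ => (1 : ℂ)) with hfdef
      have hf : Measurable f := measurable_const.indicator hABm
      have hcomp : f ∘ ⇑A = B.indicator (fun _ => (1 : ℂ)) := by
        funext x
        by_cases hx : x ∈ B
        · rw [Function.comp_apply, hfdef, Set.indicator_of_mem (Set.mem_image_of_mem _ hx),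
            Set.indicator_of_mem hx]
        · rw [Function.comp_apply, hfdef,
            Set.indicator_of_notMem (fun hmem => hx ((A.injective.mem_set_image).mp hmem)),
            Set.indicator_of_notMem hx]
      have hCineq := hC f hf
      rw [hcomp, eLpNorm_indicator_const hBm two_ne_zero ENNReal.ofNat_ne_top,
        eLpNorm_indicator_const hABm two_ne_zero ENNReal.ofNat_ne_top] at hCineq
      simp only [nnnorm_one, enorm_one, ENNReal.coe_one, one_mul, ENNReal.toReal_ofNat] at hCineq
      -- square the inequality
      have hsq : gaussianMeasure n B ≤ C ^ 2 * gaussianMeasure n (⇑A '' B) := by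
        have h2 := pow_le_pow_left' hCineq 2
        have e1 : (gaussianMeasure n B ^ ((1:ℝ)/2)) ^ (2:ℕ) = gaussianMeasure n B := by
          rw [← ENNReal.rpow_natCast (gaussianMeasure n B ^ ((1:ℝ)/2)) 2, ← ENNReal.rpow_mul]
          norm_num
        have e2 : (gaussianMeasure n (⇑A '' B) ^ ((1:ℝ)/2)) ^ (2:ℕ)
            = gaussianMeasure n (⇑A '' B) := by
          rw [← ENNReal.rpow_natCast (gaussianMeasure n (⇑A '' B) ^ ((1:ℝ)/2)) 2,
            ← ENNReal.rpow_mul]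
          norm_num
        calc gaussianMeasure n B = (gaussianMeasure n B ^ ((1:ℝ)/2)) ^ (2:ℕ) := e1.symm
          _ ≤ (C * gaussianMeasure n (⇑A '' B) ^ ((1:ℝ)/2)) ^ (2:ℕ) := h2
          _ = C ^ 2 * (gaussianMeasure n (⇑A '' B) ^ ((1:ℝ)/2)) ^ (2:ℕ) := mul_pow _ _ _
          _ = C ^ 2 * gaussianMeasure n (⇑A '' B) := by rw [e2]
      -- measure bounds
      have hμB_lb : ENNReal.ofReal (c * Real.exp (-t ^ 2 / 2)) * volume B
          ≤ gaussianMeasure n B := by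
        rw [hμ, withDensity_apply _ hBm]
        calc ENNReal.ofReal (c * Real.exp (-t ^ 2 / 2)) * volume B
            = ∫⁻ _ in B, ENNReal.ofReal (c * Real.exp (-t ^ 2 / 2)) ∂volume :=
              (setLIntegral_const B _).symm
          _ ≤ ∫⁻ x in B, ρ x ∂volume := by
              refine setLIntegral_mono hρ fun x hx => ?_
              refine ENNReal.ofReal_le_ofReal ?_
              refine mul_le_mul_of_nonneg_left ?_ hcpos.le
              refine Real.exp_le_exp.mpr ?_
              have hxt : ‖x‖ < t := by simpa [hB, dist_eq_norm] using hx
              have : ‖x‖ ^ 2 ≤ t ^ 2 := by nlinarith [norm_nonneg x]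
              nlinarith
      have hμAB_ub : gaussianMeasure n (⇑A '' B) ≤ ENNReal.ofReal c * volume (⇑A '' B) := by
        rw [hμ, withDensity_apply _ hABm]
        calc ∫⁻ x in ⇑A '' B, ρ x ∂volume
            ≤ ∫⁻ _ in ⇑A '' B, ENNReal.ofReal c ∂volume := by
              refine setLIntegral_mono measurable_const fun x hx => ?_
              refine ENNReal.ofReal_le_ofReal ?_
              have hle : Real.exp (-‖x‖ ^ 2 / 2) ≤ 1 :=
                Real.exp_le_one_iff.mpr (by nlinarith [sq_nonneg ‖x‖])
              nlinarith [Real.exp_pos (-‖x‖ ^ 2 / 2)]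
          _ = ENNReal.ofReal c * volume (⇑A '' B) := setLIntegral_const _ _
      have hvol : volume (⇑A '' B) = ENNReal.ofReal |d| * volume B := by
        have := Measure.addHaar_image_linearMap (volume : Measure (EuclideanSpace ℝ (Fin n)))
          (A : EuclideanSpace ℝ (Fin n) →ₗ[ℝ] EuclideanSpace ℝ (Fin n)) B
        simpa [hd] using this
      have hvB0 : volume B ≠ 0 := (Metric.measure_ball_pos volume 0 ht).ne'
      have hvBt : volume B ≠ ⊤ := measure_ball_lt_top.ne
      -- chain
      have chain : ENNReal.ofReal (c * Real.exp (-t ^ 2 / 2)) * volume B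
          ≤ (C ^ 2 * ENNReal.ofReal |d| * ENNReal.ofReal c) * volume B := by
        calc ENNReal.ofReal (c * Real.exp (-t ^ 2 / 2)) * volume B
            ≤ gaussianMeasure n B := hμB_lb
          _ ≤ C ^ 2 * gaussianMeasure n (⇑A '' B) := hsq
          _ ≤ C ^ 2 * (ENNReal.ofReal c * volume (⇑A '' B)) := mul_le_mul_right hμAB_ub _
          _ = (C ^ 2 * ENNReal.ofReal |d| * ENNReal.ofReal c) * volume B := by
              rw [hvol]; ring
      have step1 : ENNReal.ofReal (c * Real.exp (-t ^ 2 / 2))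
          ≤ C ^ 2 * ENNReal.ofReal |d| * ENNReal.ofReal c :=
        (ENNReal.mul_le_mul_iff_left hvB0 hvBt).mp chain
      have step2 : ENNReal.ofReal (Real.exp (-t ^ 2 / 2)) * ENNReal.ofReal c
          ≤ (C ^ 2 * ENNReal.ofReal |d|) * ENNReal.ofReal c := by
        calc ENNReal.ofReal (Real.exp (-t ^ 2 / 2)) * ENNReal.ofReal c
            = ENNReal.ofReal (c * Real.exp (-t ^ 2 / 2)) := by
              rw [← ENNReal.ofReal_mul (Real.exp_pos _).le, mul_comm]
          _ ≤ C ^ 2 * ENNReal.ofReal |d| * ENNReal.ofReal c := step1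
      exact (ENNReal.mul_le_mul_iff_left (by simp [hcpos]) ENNReal.ofReal_ne_top).mp step2
    -- take the limit t → 0⁺
    have h1 : (1 : ℝ≥0∞) ≤ C ^ 2 * ENNReal.ofReal |d| := by
      have hcont : Filter.Tendsto (fun t : ℝ => ENNReal.ofReal (Real.exp (-t ^ 2 / 2)))
          (nhdsWithin 0 (Set.Ioi 0)) (nhds 1) := by
        have hc2 : Continuous fun t : ℝ => ENNReal.ofReal (Real.exp (-t ^ 2 / 2)) :=
          ENNReal.continuous_ofReal.comp
            (Real.continuous_exp.comp (((continuous_pow 2).neg).div_const 2))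
        have := hc2.tendsto 0
        simp only [neg_zero, zero_pow, ne_eq, OfNat.ofNat_ne_zero, not_false_eq_true,
          zero_div, Real.exp_zero, ENNReal.ofReal_one] at this
        exact this.mono_left nhdsWithin_le_nhds
      exact le_of_tendsto hcont
        (Filter.eventually_of_mem self_mem_nhdsWithin fun t ht => key t ht)
    calc D = 1 * D := (one_mul _).symm
      _ ≤ (C ^ 2 * ENNReal.ofReal |d|) * D := mul_le_mul_left h1 _
      _ = C ^ 2 * (ENNReal.ofReal |d| * ENNReal.ofReal |d|⁻¹) := by rw [mul_assoc]
      _ = C ^ 2 := by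
          rw [← ENNReal.ofReal_mul (abs_nonneg d),
            mul_inv_cancel₀ (abs_ne_zero.mpr hdet), ENNReal.ofReal_one, mul_one]
  -- conclude
  have hup : sInf S ≤ D ^ ((1 : ℝ) / 2) := sInf_le hmem
  have hlo : D ^ ((1 : ℝ) / 2) ≤ sInf S := by
    refine le_sInf fun C hC => ?_
    have h := hlow C hC
    calc D ^ ((1:ℝ)/2) ≤ (C ^ 2) ^ ((1:ℝ)/2) := ENNReal.rpow_le_rpow h (by norm_num)
      _ = C := by
        rw [← ENNReal.rpow_natCast C 2, ← ENNReal.rpow_mul]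
        norm_num
  have heq : sInf S = D ^ ((1 : ℝ) / 2) := le_antisymm hup hlo
  rw [heq, ← ENNReal.rpow_natCast (D ^ ((1:ℝ)/2)) 2, ← ENNReal.rpow_mul]
  norm_num
end

section
/- Let μₙ be the standard Gaussian measure on ℝⁿ and A an invertible linear transformation of ℝⁿ with operator norm ‖A‖ > 1. Then the composition operator C_A f = f ∘ A is not bounded on L²(μₙ), i.e., there is no constant C with ‖f ∘ A‖_{L²(μₙ)} ≤ C‖f‖_{L²(μₙ)} for all f in the domain of C_A. -/
open MeasureTheory

open scoped ENNReal NNReal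

set_option maxHeartbeats 1000000 in
/-- Let `μₙ` be the standard Gaussian measure on `ℝⁿ` and `A` an invertible
linear transformation with operator norm `‖A‖ > 1`. Then the composition operator
`C_A f = f ∘ A` is not bounded on `L²(μₙ)`: there is no finite constant `C` such that
`‖f ∘ A‖₂ ≤ C‖f‖₂` for all `f` in the domain `{f ∈ L²(μₙ) : f ∘ A ∈ L²(μₙ)}` of `C_A`. -/
theorem stmt_7 {n : ℕ}
    (A : EuclideanSpace ℝ (Fin n) ≃ₗ[ℝ] EuclideanSpace ℝ (Fin n))
    (hA : 1 < ‖LinearMap.toContinuousLinearMap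
      (A : EuclideanSpace ℝ (Fin n) →ₗ[ℝ] EuclideanSpace ℝ (Fin n))‖) :
    ¬ ∃ C : ℝ≥0, ∀ f : EuclideanSpace ℝ (Fin n) → ℂ, Measurable f →
        MemLp f 2 (gaussianMeasure n) → MemLp (f ∘ A) 2 (gaussianMeasure n) →
          eLpNorm (f ∘ A) 2 (gaussianMeasure n)
            ≤ (C : ℝ≥0∞) * eLpNorm f 2 (gaussianMeasure n) := by
  rintro ⟨C, hC⟩
  set E := EuclideanSpace ℝ (Fin n)
  set T : E →L[ℝ] E := LinearMap.toContinuousLinearMap (A : E →ₗ[ℝ] E) with hT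
  have hTA : ⇑T = ⇑A := rfl
  -- find a unit vector `u` with `‖A u‖ = r > 1`
  obtain ⟨x₀, hx₀⟩ : ∃ x : E, ‖x‖ < ‖T x‖ := by
    by_contra h
    push_neg at h
    exact absurd (T.opNorm_le_bound zero_le_one (fun x => by simpa using h x)) (not_le.2 hA)
  have hx₀0 : x₀ ≠ 0 := by rintro rfl; simp at hx₀
  have hx₀pos : (0:ℝ) < ‖x₀‖ := norm_pos_iff.2 hx₀0
  set u : E := ‖x₀‖⁻¹ • x₀ with hu
  have hunorm : ‖u‖ = 1 := by
    rw [hu, norm_smul, norm_inv, norm_norm, inv_mul_cancel₀ hx₀pos.ne']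
  set r : ℝ := ‖A u‖ with hr
  have hAu : ∀ t : ℝ, A (t • u) = t • A u := fun t => A.map_smul t u
  have hr1 : (1:ℝ) < r := by
    have h1 : ‖A u‖ = ‖x₀‖⁻¹ * ‖A x₀‖ := by
      rw [hu, A.map_smul, norm_smul, norm_inv, norm_norm]
    have h2 : ‖x₀‖ < ‖A x₀‖ := by rw [← hTA]; exact hx₀
    rw [hr, h1]
    have := mul_lt_mul_of_pos_left h2 (inv_pos.2 hx₀pos)
    rwa [inv_mul_cancel₀ hx₀pos.ne'] at this
  -- constants
  set κ : ℝ := (2 * Real.pi) ^ (-(n : ℝ) / 2) with hκdef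
  have hκpos : 0 < κ := Real.rpow_pos_of_pos (by positivity) _
  set D : ℝ := |LinearMap.det (A : E →ₗ[ℝ] E)| with hD
  have hD0 : 0 ≤ D := abs_nonneg _
  set L : ℝ := Real.log ((C:ℝ)^2 * D + 1) with hLdef
  have hCD0 : (0:ℝ) ≤ (C:ℝ)^2 * D := by positivity
  have hL0 : 0 ≤ L := Real.log_nonneg (by linarith)
  set t : ℝ := max 1 ((1 + L + ‖T‖) / (r - 1)) with htdef
  have ht1 : (1:ℝ) ≤ t := le_max_left _ _
  have ht0 : (0:ℝ) ≤ t := by linarith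
  set m : ℝ := t * r - ‖T‖ with hm
  have hmt : t + 1 + L ≤ m := by
    have h1 : (1 + L + ‖T‖) / (r - 1) ≤ t := le_max_right _ _
    have h2 : 1 + L + ‖T‖ ≤ t * (r - 1) := by
      rwa [div_le_iff₀ (by linarith)] at h1
    rw [hm]; nlinarith
  have hm0 : 0 ≤ m := by linarith
  -- the sets
  set B : Set E := Metric.closedBall (t • u) 1 with hB
  have hBmeas : MeasurableSet B := measurableSet_closedBall
  have hBcomp : IsCompact B := isCompact_closedBall _ _
  set S : Set E := ⇑A '' B with hS
  have hScomp : IsCompact S := hBcomp.image (by rw [← hTA]; exact T.continuous)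
  have hSmeas : MeasurableSet S := hScomp.isClosed.measurableSet
  -- finiteness of the gaussian measure on compacts
  have hfin : ∀ s : Set E, MeasurableSet s → IsCompact s → gaussianMeasure n s ≠ ∞ := by
    intro s hs hc
    have hle : gaussianMeasure n s ≤ ENNReal.ofReal κ * volume s := by
      rw [gaussianMeasure, withDensity_apply _ hs]
      calc ∫⁻ x in s, ENNReal.ofReal ((2 * Real.pi) ^ (-(n : ℝ) / 2) * Real.exp (-‖x‖ ^ 2 / 2))
          ≤ ∫⁻ _ in s, ENNReal.ofReal κ := by
            refine setLIntegral_mono' hs (fun x _ => ENNReal.ofReal_le_ofReal ?_)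
            have he : Real.exp (-‖x‖ ^ 2 / 2) ≤ 1 := Real.exp_le_one_iff.2 (by nlinarith [sq_nonneg ‖x‖])
            rw [← hκdef]
            nlinarith
        _ = ENNReal.ofReal κ * volume s := setLIntegral_const s _
    exact (hle.trans_lt (ENNReal.mul_lt_top ENNReal.ofReal_lt_top hc.measure_lt_top)).ne
  -- lower bound for μ B
  have hnormtu : ‖t • u‖ = t := by rw [norm_smul, hunorm, mul_one, Real.norm_eq_abs, abs_of_nonneg ht0]
  have hBlow : ENNReal.ofReal (κ * Real.exp (-(t+1) ^ 2 / 2)) * volume B ≤ gaussianMeasure n B := by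
    rw [gaussianMeasure, withDensity_apply _ hBmeas]
    calc ENNReal.ofReal (κ * Real.exp (-(t+1) ^ 2 / 2)) * volume B
        = ∫⁻ _ in B, ENNReal.ofReal (κ * Real.exp (-(t+1) ^ 2 / 2)) := (setLIntegral_const B _).symm
      _ ≤ ∫⁻ x in B, ENNReal.ofReal ((2 * Real.pi) ^ (-(n : ℝ) / 2) * Real.exp (-‖x‖ ^ 2 / 2)) := by
          refine setLIntegral_mono' hBmeas (fun x hx => ENNReal.ofReal_le_ofReal ?_)
          have hx1 : ‖x - t • u‖ ≤ 1 := by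
            rw [hB, Metric.mem_closedBall, dist_eq_norm] at hx; exact hx
          have hxn : ‖x‖ ≤ t + 1 := by
            have := norm_sub_norm_le x (t • u)
            have h2 := norm_nonneg x
            rw [hnormtu] at this
            linarith
          have hsq : ‖x‖ ^ 2 ≤ (t + 1) ^ 2 := by nlinarith [norm_nonneg x]
          have he : Real.exp (-(t+1) ^ 2 / 2) ≤ Real.exp (-‖x‖ ^ 2 / 2) :=
            Real.exp_le_exp.2 (by linarith)
          rw [← hκdef]
          nlinarith [Real.exp_pos (-(t+1) ^ 2 / 2)]
  -- upper bound for μ S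
  have hSupp : gaussianMeasure n S ≤ ENNReal.ofReal (κ * Real.exp (-m ^ 2 / 2)) * volume S := by
    rw [gaussianMeasure, withDensity_apply _ hSmeas]
    calc ∫⁻ x in S, ENNReal.ofReal ((2 * Real.pi) ^ (-(n : ℝ) / 2) * Real.exp (-‖x‖ ^ 2 / 2))
        ≤ ∫⁻ _ in S, ENNReal.ofReal (κ * Real.exp (-m ^ 2 / 2)) := by
          refine setLIntegral_mono' hSmeas (fun y hy => ENNReal.ofReal_le_ofReal ?_)
          obtain ⟨x, hx, rfl⟩ := hy
          have hx1 : ‖x - t • u‖ ≤ 1 := by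
            rw [hB, Metric.mem_closedBall, dist_eq_norm] at hx; exact hx
          have hAtu : ‖A (t • u)‖ = t * r := by
            rw [hAu, norm_smul, Real.norm_eq_abs, abs_of_nonneg ht0, ← hr]
          have hdiff : ‖A (t • u) - A x‖ ≤ ‖T‖ := by
            have : A (t • u) - A x = T ((t • u) - x) := by
              rw [hTA, map_sub]
            rw [this]
            calc ‖T (t • u - x)‖ ≤ ‖T‖ * ‖t • u - x‖ := T.le_opNorm _
              _ ≤ ‖T‖ * 1 := by
                  refine mul_le_mul_of_nonneg_left ?_ (norm_nonneg T)
                  rwa [norm_sub_rev] at hx1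
              _ = ‖T‖ := mul_one _
          have hylb : m ≤ ‖A x‖ := by
            have := norm_sub_norm_le (A (t • u)) (A x)
            rw [hAtu] at this
            rw [hm]; linarith
          have hsq : m ^ 2 ≤ ‖A x‖ ^ 2 := by nlinarith
          have he : Real.exp (-‖A x‖ ^ 2 / 2) ≤ Real.exp (-m ^ 2 / 2) :=
            Real.exp_le_exp.2 (by nlinarith [hsq])
          rw [← hκdef]
          nlinarith [Real.exp_pos (-‖A x‖ ^ 2 / 2)]
      _ = ENNReal.ofReal (κ * Real.exp (-m ^ 2 / 2)) * volume S := setLIntegral_const S _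
  -- volume of the image
  have hvolS : volume S = ENNReal.ofReal D * volume B := by
    rw [hS, hD]
    exact Measure.addHaar_image_linearMap volume (A : E →ₗ[ℝ] E) B
  have hvB_pos : 0 < volume B := Metric.measure_closedBall_pos volume _ one_pos
  have hvB_fin : volume B ≠ ∞ := hBcomp.measure_lt_top.ne
  -- the indicator function
  set f : E → ℂ := S.indicator (fun _ => (1:ℂ)) with hf
  have hfmeas : Measurable f := measurable_const.indicator hSmeas
  have hμS_fin : gaussianMeasure n S ≠ ∞ := hfin S hSmeas hScomp
  have hμB_fin : gaussianMeasure n B ≠ ∞ := hfin B hBmeas hBcomp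
  have hfA : f ∘ ⇑A = B.indicator (fun _ => (1:ℂ)) := by
    have hpre : ⇑A ⁻¹' S = B := A.injective.preimage_image B
    funext x
    by_cases hx : x ∈ B
    · have hAx : A x ∈ S := ⟨x, hx, rfl⟩
      simp [hf, Function.comp, Set.indicator_of_mem hAx, Set.indicator_of_mem hx]
    · have hAx : A x ∉ S := by
        rw [← hpre] at hx; exact hx
      simp [hf, Function.comp, Set.indicator_of_notMem hAx, Set.indicator_of_notMem hx]
  have hmem : MemLp f 2 (gaussianMeasure n) :=
    memLp_indicator_const 2 hSmeas 1 (Or.inr hμS_fin)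
  have hmemA : MemLp (f ∘ ⇑A) 2 (gaussianMeasure n) := by
    rw [hfA]
    exact memLp_indicator_const 2 hBmeas 1 (Or.inr hμB_fin)
  have hineq := hC f hfmeas hmem hmemA
  rw [hfA, hf, eLpNorm_indicator_const hBmeas two_ne_zero (by norm_num),
    eLpNorm_indicator_const hSmeas two_ne_zero (by norm_num)] at hineq
  simp only [nnnorm_one, enorm_one, ENNReal.coe_one, one_mul, ENNReal.toReal_ofNat] at hineq
  -- square the inequality
  have h2 : gaussianMeasure n B ≤ (C:ℝ≥0∞) ^ 2 * gaussianMeasure n S := by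
    have h := ENNReal.rpow_le_rpow hineq (by norm_num : (0:ℝ) ≤ 2)
    rw [ENNReal.mul_rpow_of_nonneg _ _ (by norm_num : (0:ℝ) ≤ 2),
      ← ENNReal.rpow_mul, ← ENNReal.rpow_mul] at h
    norm_num at h
    rwa [← ENNReal.rpow_natCast (C:ℝ≥0∞) 2] at h ⊢
    -- fallback; may need adjustment
  -- chain of inequalities
  have hchain : ENNReal.ofReal (κ * Real.exp (-(t+1) ^ 2 / 2)) * volume B
      ≤ ENNReal.ofReal ((C:ℝ)^2 * D * (κ * Real.exp (-m ^ 2 / 2))) * volume B := by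
    calc ENNReal.ofReal (κ * Real.exp (-(t+1) ^ 2 / 2)) * volume B
        ≤ gaussianMeasure n B := hBlow
      _ ≤ (C:ℝ≥0∞) ^ 2 * gaussianMeasure n S := h2
      _ ≤ (C:ℝ≥0∞) ^ 2 * (ENNReal.ofReal (κ * Real.exp (-m ^ 2 / 2)) * volume S) :=
          mul_le_mul_right hSupp _
      _ = ENNReal.ofReal ((C:ℝ)^2 * D * (κ * Real.exp (-m ^ 2 / 2))) * volume B := by
          have hsc : ((C:ℝ≥0∞)) ^ 2 * ENNReal.ofReal (κ * Real.exp (-m ^ 2 / 2))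
              * ENNReal.ofReal D
              = ENNReal.ofReal ((C:ℝ)^2 * D * (κ * Real.exp (-m ^ 2 / 2))) := by
            rw [show ((C:ℝ≥0∞)) = ENNReal.ofReal (C:ℝ) from (ENNReal.ofReal_coe_nnreal (p := C)).symm,
              ← ENNReal.ofReal_pow (NNReal.coe_nonneg C),
              ← ENNReal.ofReal_mul (by positivity), ← ENNReal.ofReal_mul (by positivity)]
            congr 1
            ring
          rw [hvolS, ← mul_assoc, ← mul_assoc, hsc]
  have hkey : κ * Real.exp (-(t+1) ^ 2 / 2) ≤ (C:ℝ)^2 * D * (κ * Real.exp (-m ^ 2 / 2)) := by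
    have := (ENNReal.mul_le_mul_iff_left hvB_pos.ne' hvB_fin).1 hchain
    exact (ENNReal.ofReal_le_ofReal_iff (by positivity)).1 this
  -- derive the contradiction
  have hkey' : Real.exp (-(t+1) ^ 2 / 2) ≤ (C:ℝ)^2 * D * Real.exp (-m ^ 2 / 2) := by
    nlinarith [Real.exp_pos (-(t+1) ^ 2 / 2), Real.exp_pos (-m ^ 2 / 2)]
  have hexp1 : Real.exp (m ^ 2 / 2 - (t+1) ^ 2 / 2) ≤ (C:ℝ)^2 * D := by
    have h3 : Real.exp (m ^ 2 / 2 - (t+1) ^ 2 / 2)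
        = Real.exp (-(t+1) ^ 2 / 2) * Real.exp (m ^ 2 / 2) := by
      rw [← Real.exp_add]; ring_nf
    have h4 : Real.exp (-(t+1) ^ 2 / 2) * Real.exp (m ^ 2 / 2)
        ≤ ((C:ℝ)^2 * D * Real.exp (-m ^ 2 / 2)) * Real.exp (m ^ 2 / 2) :=
      mul_le_mul_of_nonneg_right hkey' (Real.exp_pos _).le
    have h5 : ((C:ℝ)^2 * D * Real.exp (-m ^ 2 / 2)) * Real.exp (m ^ 2 / 2) = (C:ℝ)^2 * D := by
      rw [mul_assoc, ← Real.exp_add, show -m ^ 2 / 2 + m ^ 2 / 2 = 0 by ring, Real.exp_zero,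
        mul_one]
    rw [h3]; linarith
  have hexp2 : (C:ℝ)^2 * D + 1 ≤ Real.exp (m ^ 2 / 2 - (t+1) ^ 2 / 2) := by
    have h6 : L ≤ m ^ 2 / 2 - (t+1) ^ 2 / 2 := by nlinarith
    calc (C:ℝ)^2 * D + 1 = Real.exp L := (Real.exp_log (by linarith)).symm
      _ ≤ _ := Real.exp_le_exp.2 h6
  linarith
end

section
/- Let μₖ be a σ-finite measure on (X_k, 𝒜_k), let (X, 𝒜, μ) be a measure space, and let δᵏ : X → X_k be a measurable surjection such that μ∘(δᵏ)⁻¹ ≪ μₖ with bounded Radon–Nikodym derivative. If the map Δₖ : L²(μₖ) → L²(μ), f ↦ f∘δᵏ, is an isometry, then d(μ∘(δᵏ)⁻¹)/dμₖ = 1 μₖ-almost everywhere, and consequently Δₖ : L^p(μₖ) → L^p(μ), f ↦ f∘δᵏ, is an isometry for every 1 ≤ p < ∞. -/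
open MeasureTheory

open scoped ENNReal

/-- Let `μₖ` be σ-finite on `Xₖ`, `(X, 𝒜, μ)` a measure space and
`δ : X → Xₖ` a measurable surjection with `μ∘δ⁻¹ ≪ μₖ` with bounded Radon–Nikodym
derivative `h` (i.e. `μ.map δ = μₖ.withDensity h` with `h` essentially bounded). If
`Δₖ : L²(μₖ) → L²(μ)`, `f ↦ f∘δ`, is an isometry, then `h = 1` a.e. `[μₖ]` and
consequently `f ↦ f∘δ` is an isometry from `L^p(μₖ)` to `L^p(μ)` for every `1 ≤ p < ∞`. -/
theorem stmt_10 {X Xk : Type*} [MeasurableSpace X] [MeasurableSpace Xk]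
    (μ : Measure X) (μk : Measure Xk) [SigmaFinite μk]
    (δ : X → Xk) (hδ : Measurable δ) (hsurj : Function.Surjective δ)
    (h : Xk → ℝ≥0∞) (hh : Measurable h) (hd : μ.map δ = μk.withDensity h)
    (hbdd : essSup h μk < ∞)
    (hisom : ∀ f : Xk → ℂ, Measurable f → eLpNorm (f ∘ δ) 2 μ = eLpNorm f 2 μk) :
    h =ᵐ[μk] 1 ∧
      ∀ p : ℝ≥0∞, 1 ≤ p → p ≠ ∞ → ∀ f : Xk → ℂ, Measurable f →
        eLpNorm (f ∘ δ) p μ = eLpNorm f p μk := by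
  have key : h =ᵐ[μk] 1 := by
    apply ae_eq_of_forall_setLIntegral_eq_of_sigmaFinite hh measurable_one
    intro s hs hfin
    have h1 : ∫⁻ x in s, h x ∂μk = μ (δ ⁻¹' s) := by
      rw [← withDensity_apply h hs, ← hd, Measure.map_apply hδ hs]
    have h2 := hisom (s.indicator fun _ => (1:ℂ)) (measurable_one.indicator hs)
    have hcomp : (s.indicator fun _ => (1:ℂ)) ∘ δ = (δ ⁻¹' s).indicator fun _ => (1:ℂ) := by
      ext x; by_cases hx : δ x ∈ s <;> simp [Set.indicator, hx, Set.mem_preimage]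
    rw [hcomp, eLpNorm_indicator_const (hδ hs) two_ne_zero (by norm_num),
        eLpNorm_indicator_const hs two_ne_zero (by norm_num)] at h2
    simp only [nnnorm_one, ENNReal.coe_one, one_mul, enorm_one] at h2
    have h3 : μ (δ ⁻¹' s) = μk s :=
      ENNReal.rpow_left_injective (by norm_num) h2
    rw [h1, h3]; simp
  refine ⟨key, fun p hp hp' f hf => ?_⟩
  have hmap : μ.map δ = μk := by
    rw [hd, withDensity_congr_ae key, withDensity_one]
  rw [← hmap]
  exact (eLpNorm_map_measure (hmap ▸ hf.aestronglyMeasurable) hδ.aemeasurable).symm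
end

section
/- Let A : ℝⁿ → ℝⁿ be an invertible linear map with ‖A‖² ≤ 2 − 2t₀ for some t₀ > 0 and det A = 1, and let μₙ be the standard Gaussian measure on ℝⁿ. Then the Radon–Nikodym derivative h(x) = exp((‖x‖² − ‖A⁻¹x‖²)/2) satisfies ∫_{ℝⁿ} h(x)² dμₙ(x) ≤ (2π)^{-n/2} ∫_{ℝⁿ} exp(−(t₀/2)‖x‖²) dλₙ(x) = t₀^{-n/2}; in particular h ∈ L²(μₙ) with a bound independent of the particular A (given t₀). -/
open MeasureTheory

open scoped ENNReal

theorem aux_integrable {n : ℕ} {b : ℝ} (hb : 0 < b) :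
    Integrable (fun x : EuclideanSpace ℝ (Fin n) => Real.exp (-b * ‖x‖ ^ 2)) := by
  have h := (GaussianFourier.integrable_cexp_neg_mul_sq_norm_add
    (V := EuclideanSpace ℝ (Fin n)) (b := (b : ℂ)) (by simpa using hb) 0 0).norm
  convert h using 2 with x
  simp [Complex.norm_exp]
  left; norm_cast

/-- Let `A : ℝⁿ → ℝⁿ` be an invertible linear map with `‖A‖² ≤ 2 − 2t₀`
(`t₀ > 0`) and `det A = 1`, and let `μₙ` be the standard Gaussian measure. Then
`h(x) = exp((‖x‖² − ‖A⁻¹x‖²)/2)` satisfies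
`∫ h² dμₙ ≤ (2π)^{-n/2} ∫ exp(−(t₀/2)‖x‖²) dλₙ = t₀^{-n/2}`;
in particular `h ∈ L²(μₙ)` with a bound depending only on `t₀` and `n`. -/
theorem stmt_17 {n : ℕ} (t₀ : ℝ) (ht₀ : 0 < t₀)
    (A : EuclideanSpace ℝ (Fin n) ≃ₗ[ℝ] EuclideanSpace ℝ (Fin n))
    (hA : ‖LinearMap.toContinuousLinearMap
      (A : EuclideanSpace ℝ (Fin n) →ₗ[ℝ] EuclideanSpace ℝ (Fin n))‖ ^ 2 ≤ 2 - 2 * t₀)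
    (hdet : LinearMap.det
      (A : EuclideanSpace ℝ (Fin n) →ₗ[ℝ] EuclideanSpace ℝ (Fin n)) = 1) :
    (∫ x, Real.exp ((‖x‖ ^ 2 - ‖A.symm x‖ ^ 2) / 2) ^ 2 ∂(gaussianMeasure n))
        ≤ (2 * Real.pi) ^ (-(n : ℝ) / 2)
          * ∫ x : EuclideanSpace ℝ (Fin n), Real.exp (-(t₀ / 2) * ‖x‖ ^ 2) ∧
      (2 * Real.pi) ^ (-(n : ℝ) / 2)
          * (∫ x : EuclideanSpace ℝ (Fin n), Real.exp (-(t₀ / 2) * ‖x‖ ^ 2))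
        = t₀ ^ (-(n : ℝ) / 2) ∧
      MemLp (fun x => Real.exp ((‖x‖ ^ 2 - ‖A.symm x‖ ^ 2) / 2)) 2 (gaussianMeasure n) := by
  set c : ℝ := (2 * Real.pi) ^ (-(n : ℝ) / 2) with hc
  have hcpos : 0 < c := Real.rpow_pos_of_pos (by positivity) _
  set T := LinearMap.toContinuousLinearMap
      (A : EuclideanSpace ℝ (Fin n) →ₗ[ℝ] EuclideanSpace ℝ (Fin n)) with hT
  -- key pointwise inequality
  have key : ∀ x : EuclideanSpace ℝ (Fin n),
      ‖x‖ ^ 2 / 2 - ‖A.symm x‖ ^ 2 ≤ -(t₀ / 2) * ‖x‖ ^ 2 := by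
    intro x
    have h1 : ‖x‖ ≤ ‖T‖ * ‖A.symm x‖ := by
      have : T (A.symm x) = x := by
        simp [hT, LinearMap.toContinuousLinearMap]
      calc ‖x‖ = ‖T (A.symm x)‖ := by rw [this]
        _ ≤ ‖T‖ * ‖A.symm x‖ := T.le_opNorm _
    have h2 : ‖x‖ ^ 2 ≤ ‖T‖ ^ 2 * ‖A.symm x‖ ^ 2 := by
      calc ‖x‖ ^ 2 ≤ (‖T‖ * ‖A.symm x‖) ^ 2 := by
            apply pow_le_pow_left₀ (norm_nonneg _) h1
        _ = ‖T‖ ^ 2 * ‖A.symm x‖ ^ 2 := by ring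
    have h3 : ‖x‖ ^ 2 ≤ 2 * ‖A.symm x‖ ^ 2 := by
      refine h2.trans ?_
      have : ‖T‖ ^ 2 ≤ 2 := hA.trans (by linarith)
      nlinarith [sq_nonneg ‖A.symm x‖]
    have h4 : ‖x‖ ^ 2 / 2 - ‖A.symm x‖ ^ 2 ≤ -t₀ * ‖A.symm x‖ ^ 2 := by
      nlinarith [sq_nonneg ‖A.symm x‖]
    nlinarith
  have hbpos : (0 : ℝ) < t₀ / 2 := by linarith
  have hint : Integrable (fun x : EuclideanSpace ℝ (Fin n) =>
      Real.exp (-(t₀ / 2) * ‖x‖ ^ 2)) := aux_integrable hbpos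
  -- rewrite the integral over the Gaussian measure as a Lebesgue integral
  have contAsymm : Continuous fun x : EuclideanSpace ℝ (Fin n) => A.symm x :=
    (A.symm : EuclideanSpace ℝ (Fin n) →ₗ[ℝ]
      EuclideanSpace ℝ (Fin n)).continuous_of_finiteDimensional
  have conth : Continuous fun x : EuclideanSpace ℝ (Fin n) =>
      Real.exp ((‖x‖ ^ 2 - ‖A.symm x‖ ^ 2) / 2) :=
    Real.continuous_exp.comp (((continuous_norm.pow 2).sub (contAsymm.norm.pow 2)).div_const 2)
  have hmeas : Measurable (fun x : EuclideanSpace ℝ (Fin n) =>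
      ENNReal.ofReal ((2 * Real.pi) ^ (-(n : ℝ) / 2) * Real.exp (-‖x‖ ^ 2 / 2))) := by
    apply Measurable.ennreal_ofReal
    exact (measurable_const.mul ((((measurable_norm.pow_const 2).neg).div_const 2).exp))
  have hmeasN : Measurable (fun x : EuclideanSpace ℝ (Fin n) =>
      Real.toNNReal ((2 * Real.pi) ^ (-(n : ℝ) / 2) * Real.exp (-‖x‖ ^ 2 / 2))) :=
    (measurable_const.mul ((((measurable_norm.pow_const 2).neg).div_const 2).exp)).real_toNNReal
  have cont2 : Continuous (fun x : EuclideanSpace ℝ (Fin n) =>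
      Real.exp ((‖x‖ ^ 2 - ‖A.symm x‖ ^ 2) / 2) ^ 2) := conth.pow 2
  have hrw : (∫ x, Real.exp ((‖x‖ ^ 2 - ‖A.symm x‖ ^ 2) / 2) ^ 2 ∂(gaussianMeasure n))
      = ∫ x : EuclideanSpace ℝ (Fin n),
        c * Real.exp (-‖x‖ ^ 2 / 2) * Real.exp ((‖x‖ ^ 2 - ‖A.symm x‖ ^ 2) / 2) ^ 2 := by
    rw [gaussianMeasure]
    simp only [ENNReal.ofReal]
    rw [integral_withDensity_eq_integral_smul hmeasN]
    congr 1 with x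
    rw [NNReal.smul_def, Real.coe_toNNReal _ (by positivity), smul_eq_mul, ← hc]
  -- the integrand is bounded by c * exp(-(t₀/2)‖x‖²)
  have hbd : ∀ x : EuclideanSpace ℝ (Fin n),
      c * Real.exp (-‖x‖ ^ 2 / 2) * Real.exp ((‖x‖ ^ 2 - ‖A.symm x‖ ^ 2) / 2) ^ 2
        ≤ c * Real.exp (-(t₀ / 2) * ‖x‖ ^ 2) := by
    intro x
    have e2 : Real.exp ((‖x‖ ^ 2 - ‖A.symm x‖ ^ 2) / 2) ^ 2
        = Real.exp (‖x‖ ^ 2 - ‖A.symm x‖ ^ 2) := by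
      rw [pow_two, ← Real.exp_add]
      congr 1
      ring
    have : Real.exp (-‖x‖ ^ 2 / 2) * Real.exp ((‖x‖ ^ 2 - ‖A.symm x‖ ^ 2) / 2) ^ 2
        = Real.exp (‖x‖ ^ 2 / 2 - ‖A.symm x‖ ^ 2) := by
      rw [e2, ← Real.exp_add]
      congr 1
      ring
    rw [mul_assoc, this]
    exact mul_le_mul_of_nonneg_left (Real.exp_le_exp.mpr (key x)) hcpos.le
  have hnonneg : ∀ x : EuclideanSpace ℝ (Fin n),
      0 ≤ c * Real.exp (-‖x‖ ^ 2 / 2) * Real.exp ((‖x‖ ^ 2 - ‖A.symm x‖ ^ 2) / 2) ^ 2 := by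
    intro x; positivity
  have hint2 : Integrable (fun x : EuclideanSpace ℝ (Fin n) =>
      c * Real.exp (-‖x‖ ^ 2 / 2) * Real.exp ((‖x‖ ^ 2 - ‖A.symm x‖ ^ 2) / 2) ^ 2) := by
    apply Integrable.mono' (hint.const_mul c)
    · exact ((continuous_const.mul (Real.continuous_exp.comp
        ((continuous_norm.pow 2).neg.div_const 2))).mul (conth.pow 2)).aestronglyMeasurable
    · filter_upwards with x
      rw [Real.norm_eq_abs, abs_of_nonneg (hnonneg x)]
      exact hbd x
  refine ⟨?_, ?_, ?_⟩
  · rw [hrw, ← integral_const_mul]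
    exact integral_mono hint2 (hint.const_mul c) hbd
  · rw [GaussianFourier.integral_rexp_neg_mul_sq_norm hbpos]
    have hfr : (Module.finrank ℝ (EuclideanSpace ℝ (Fin n)) : ℝ) = (n : ℝ) := by simp
    have h2pi : (0 : ℝ) < 2 * Real.pi := by positivity
    have e1 : Real.pi / (t₀ / 2) = (2 * Real.pi) * t₀⁻¹ := by field_simp
    rw [hfr, hc, e1, neg_div, Real.rpow_neg h2pi.le, ← Real.inv_rpow h2pi.le,
      ← Real.mul_rpow (by positivity) (by positivity),
      show (2 * Real.pi)⁻¹ * (2 * Real.pi * t₀⁻¹) = t₀⁻¹ by field_simp,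
      Real.inv_rpow ht₀.le, ← Real.rpow_neg ht₀.le]
  · rw [memLp_two_iff_integrable_sq]
    · rw [gaussianMeasure, integrable_withDensity_iff hmeas]
      · apply hint2.congr
        filter_upwards with x
        rw [ENNReal.toReal_ofReal (by positivity), ← hc]
        ring
      · filter_upwards with x
        exact ENNReal.ofReal_lt_top
    · exact conth.aestronglyMeasurable
end

section
/- Let ρ : ℝ → (0,∞) be an even function whose restriction to [0,∞) is decreasing, and suppose there are M > 0 and α ≥ 1 such that ρ(x+ε)/ρ(x) ≤ α for all x ∈ ℝ and 0 ≤ ε ≤ M. Let p : ℝ → [0,M] be any measurable function and define B : ℝ² → ℝ², B(x₁,x₂) = (x₁, x₂ + p(x₁)), with inverse A. Then for the measure μ = (ρ₁ dλ)⊗(ρ dλ) on ℝ² (ρ₁ any positive density), μ∘A⁻¹ ≪ μ and the Radon–Nikodym derivative satisfies d(μ∘A⁻¹)/dμ (x₁,x₂) = ρ(x₂ + p(x₁))/ρ(x₂) ≤ α almost everywhere; hence C_A is bounded on L²(μ) with ‖C_A‖² ≤ α. -/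
open MeasureTheory

open scoped ENNReal

/-- Let `ρ : ℝ → (0,∞)` be even with `ρ|_{[0,∞)}` decreasing, and suppose
there are `M > 0`, `α ≥ 1` with `ρ(x+ε)/ρ(x) ≤ α` whenever `0 ≤ ε ≤ M`. Let
`p : ℝ → [0,M]` be measurable and `B(x₁,x₂) = (x₁, x₂ + p(x₁))` with inverse
`A(x₁,x₂) = (x₁, x₂ − p(x₁))`. Then for `μ = (ρ₁ dλ) ⊗ (ρ dλ)` (`ρ₁` any positive density):
`μ∘A⁻¹ ≪ μ`, the Radon–Nikodym derivative is `(x₁,x₂) ↦ ρ(x₂ + p(x₁))/ρ(x₂) ≤ α` a.e.,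
and `C_A` is bounded on `L²(μ)` with `‖C_A‖² ≤ α`. -/
theorem stmt_19 (ρ ρ₁ : ℝ → ℝ) (hρ : Measurable ρ) (hρ₁ : Measurable ρ₁)
    (hρpos : ∀ x, 0 < ρ x) (hρ₁pos : ∀ x, 0 < ρ₁ x)
    (hρeven : ∀ x, ρ (-x) = ρ x) (hρanti : AntitoneOn ρ (Set.Ici (0 : ℝ)))
    (M α : ℝ) (hM : 0 < M) (hα : 1 ≤ α)
    (hratio : ∀ x ε : ℝ, 0 ≤ ε → ε ≤ M → ρ (x + ε) ≤ α * ρ x)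
    (p : ℝ → ℝ) (hp : Measurable p) (hprange : ∀ x, p x ∈ Set.Icc (0 : ℝ) M)
    (μ : Measure (ℝ × ℝ))
    (hμ : μ = (volume.withDensity fun x => ENNReal.ofReal (ρ₁ x)).prod
      (volume.withDensity fun x => ENNReal.ofReal (ρ x))) :
    μ.map (fun q : ℝ × ℝ => (q.1, q.2 - p q.1)) ≪ μ ∧
      μ.map (fun q : ℝ × ℝ => (q.1, q.2 - p q.1))
        = μ.withDensity (fun q => ENNReal.ofReal (ρ (q.2 + p q.1) / ρ q.2)) ∧
      (∀ᵐ q ∂μ, ρ (q.2 + p q.1) / ρ q.2 ≤ α) ∧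
      ∀ f : ℝ × ℝ → ℂ, Measurable f →
        eLpNorm (f ∘ fun q : ℝ × ℝ => (q.1, q.2 - p q.1)) 2 μ
          ≤ ENNReal.ofReal (Real.sqrt α) * eLpNorm f 2 μ := by
  set A : ℝ × ℝ → ℝ × ℝ := fun q => (q.1, q.2 - p q.1) with hAdef
  have hA : Measurable A := measurable_fst.prodMk (measurable_snd.sub (hp.comp measurable_fst))
  set g : ℝ × ℝ → ℝ≥0∞ := fun q => ENNReal.ofReal (ρ (q.2 + p q.1) / ρ q.2) with hgdef
  have hg : Measurable g :=
    ENNReal.measurable_ofReal.comp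
      ((hρ.comp (measurable_snd.add (hp.comp measurable_fst))).div (hρ.comp measurable_snd))
  have hgle : ∀ q, g q ≤ ENNReal.ofReal α := by
    intro q
    refine ENNReal.ofReal_le_ofReal ?_
    rw [div_le_iff₀ (hρpos q.2)]
    exact hratio q.2 (p q.1) (hprange q.1).1 (hprange q.1).2
  -- the key measure identity
  have key : μ.map A = μ.withDensity g := by
    subst hμ
    ext s hs
    rw [Measure.map_apply hA hs, Measure.prod_apply (hA hs), withDensity_apply _ hs,
      ← lintegral_indicator hs, MeasureTheory.lintegral_prod _ (hg.indicator hs).aemeasurable]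
    refine lintegral_congr fun x => ?_
    set c := p x with hc
    have hsx : MeasurableSet (Prod.mk x ⁻¹' s) := measurable_prodMk_left hs
    have hT : Measurable fun y : ℝ => y - c := by fun_prop
    have hpre : Prod.mk x ⁻¹' (A ⁻¹' s) = (fun y => y - c) ⁻¹' (Prod.mk x ⁻¹' s) := rfl
    rw [hpre, withDensity_apply _ (hT hsx)]
    -- LHS: change of variables y ↦ y + c
    have hmap : volume.map (fun y : ℝ => y - c) = volume := by
      have : (fun y : ℝ => y - c) = fun y : ℝ => y + (-c) := by
        funext y; ring
      rw [this, map_add_right_eq_self volume (-c)]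
    have hLHS : ∫⁻ y in (fun y => y - c) ⁻¹' (Prod.mk x ⁻¹' s), ENNReal.ofReal (ρ y)
        = ∫⁻ z in Prod.mk x ⁻¹' s, ENNReal.ofReal (ρ (z + c)) := by
      conv_rhs => rw [← hmap]
      have hT2 : Measurable fun z : ℝ => ENNReal.ofReal (ρ (z + c)) := by fun_prop
      rw [setLIntegral_map hsx hT2 hT]
      refine setLIntegral_congr_fun (hT hsx)
        (fun y _ => ?_)
      simp
    rw [hLHS]
    -- RHS: inner lintegral over withDensity
    have hm2 : Measurable fun y : ℝ => s.indicator g (x, y) :=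
      (hg.indicator hs).comp measurable_prodMk_left
    have hmρ : Measurable fun y : ℝ => ENNReal.ofReal (ρ y) := hρ.ennreal_ofReal
    rw [lintegral_withDensity_eq_lintegral_mul volume hmρ hm2]
    rw [← lintegral_indicator hsx]
    refine lintegral_congr fun y => ?_
    by_cases hy : (x, y) ∈ s
    · have hy' : y ∈ Prod.mk x ⁻¹' s := hy
      simp only [Set.indicator_of_mem hy', Set.indicator_of_mem hy, Pi.mul_apply,
        Function.comp_apply]
      rw [hgdef]
      simp only []
      rw [← ENNReal.ofReal_mul (hρpos y).le]
      congr 1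
      rw [mul_div_cancel₀ _ (hρpos y).ne']
    · have hy' : y ∉ Prod.mk x ⁻¹' s := hy
      simp [Set.indicator_of_notMem hy', Set.indicator_of_notMem hy]
  refine ⟨?_, key, ?_, ?_⟩
  · rw [key]; exact withDensity_absolutelyContinuous μ g
  · exact  Filter.Eventually.of_forall fun q => by
      rw [div_le_iff₀ (hρpos q.2)]
      exact hratio q.2 (p q.1) (hprange q.1).1 (hprange q.1).2
  · intro f hf
    have h2 : (2 : ℝ≥0∞) ≠ 0 := by norm_num
    have h2t : (2 : ℝ≥0∞) ≠ ∞ := by norm_num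
    rw [eLpNorm_eq_lintegral_rpow_enorm_toReal h2 h2t, eLpNorm_eq_lintegral_rpow_enorm_toReal h2 h2t]
    simp only [enorm_eq_nnnorm]
    have htr : (2 : ℝ≥0∞).toReal = (2 : ℝ) := by norm_num
    rw [htr]
    have hfm : Measurable fun q : ℝ × ℝ => ((‖f q‖₊ : ℝ≥0∞)) ^ (2 : ℝ) :=
      (hf.nnnorm.coe_nnreal_ennreal).pow_const _
    have hineq : ∫⁻ q, ((‖(f ∘ A) q‖₊ : ℝ≥0∞)) ^ (2 : ℝ) ∂μ
        ≤ ENNReal.ofReal α * ∫⁻ q, ((‖f q‖₊ : ℝ≥0∞)) ^ (2 : ℝ) ∂μ := by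
      have e1 : ∫⁻ q, ((‖(f ∘ A) q‖₊ : ℝ≥0∞)) ^ (2 : ℝ) ∂μ
          = ∫⁻ q, ((‖f q‖₊ : ℝ≥0∞)) ^ (2 : ℝ) ∂(μ.map A) := (lintegral_map hfm hA).symm
      rw [e1, key, lintegral_withDensity_eq_lintegral_mul μ hg hfm, ← lintegral_const_mul _ hfm]
      exact lintegral_mono fun q => mul_le_mul_left (hgle q) _
    calc (∫⁻ q, ((‖(f ∘ A) q‖₊ : ℝ≥0∞)) ^ (2 : ℝ) ∂μ) ^ (1 / (2:ℝ))
        ≤ (ENNReal.ofReal α * ∫⁻ q, ((‖f q‖₊ : ℝ≥0∞)) ^ (2 : ℝ) ∂μ) ^ (1 / (2:ℝ)) :=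
          ENNReal.rpow_le_rpow hineq (by norm_num)
      _ = ENNReal.ofReal α ^ (1 / (2:ℝ)) * (∫⁻ q, ((‖f q‖₊ : ℝ≥0∞)) ^ (2 : ℝ) ∂μ) ^ (1 / (2:ℝ)) :=
          ENNReal.mul_rpow_of_nonneg _ _ (by norm_num)
      _ = ENNReal.ofReal (Real.sqrt α) * (∫⁻ q, ((‖f q‖₊ : ℝ≥0∞)) ^ (2 : ℝ) ∂μ) ^ (1 / (2:ℝ)) := by
          rw [ENNReal.ofReal_rpow_of_pos (by linarith : (0:ℝ) < α)]
          congr 1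
          rw [Real.sqrt_eq_rpow]
end
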